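/- For every n ≥ 1, the map φ on S̄_n defined by 'box (i,j) of φ(S) contains α if and only if box (j,i) of S contains β, and box (i,j) of φ(S) contains β if and only if box (j,i) of S contains α' is a well-defined involution of S̄_n satisfying N_α(φ(S)) = N_β(S) and N_β(φ(S)) = N_α(S), and for each j ∈ {1,…,n−1}, φ(S)(j) = α if and only if S(n−j) = β (where T(j) denotes the content of the second-main-diagonal box (n−j,j) of T ∈ S̄_n). Consequently, for all α, β > 0 and every integer k ≥ 0, the probability that the second main diagonal of S_{n,α,β} contains exactly k β's equals the probability that the second main diagonal of S_{n,β,α} contains exactly k α's. -/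

import Mathlib

/-- The two symbols α, β that may fill a box of an α/β-staircase tableau. -/
inductive ABSymbol : Type
  | A : ABSymbol  -- α
  | B : ABSymbol  -- β
  deriving DecidableEq

instance instFintypeABSymbol : Fintype ABSymbol :=
  ⟨{ABSymbol.A, ABSymbol.B}, fun x => by cases x <;> simp⟩

/-- `f` is an α/β-staircase tableau of size `n`.  Boxes are indexed `0`-based, so
the box `(i, j)` (with `1 ≤ i, j` and `i + j ≤ n + 1` in the `1`-based indexing of
the paper) corresponds to `f ⟨i-1⟩ ⟨j-1⟩`; the condition `i + j ≤ n + 1` becomes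
`(i-1) + (j-1) < n`, and the main diagonal `i + j = n + 1` becomes
`(i-1) + (j-1) + 1 = n`. -/
def IsABStaircase (n : ℕ) (f : Fin n → Fin n → Option ABSymbol) : Prop :=
  (∀ i j : Fin n, n ≤ (i : ℕ) + (j : ℕ) → f i j = none) ∧
  (∀ i j i' : Fin n, f i j = some ABSymbol.A → i' < i → f i' j = none) ∧
  (∀ i j j' : Fin n, f i j = some ABSymbol.B → j' < j → f i j' = none) ∧
  (∀ i j : Fin n, (i : ℕ) + (j : ℕ) + 1 = n → f i j ≠ none)

/-- `N_α(f)`, the number of α's in `f`. -/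
def NA (n : ℕ) (f : Fin n → Fin n → Option ABSymbol) : ℕ :=
  (Finset.univ.filter (fun p : Fin n × Fin n => f p.1 p.2 = some ABSymbol.A)).card

/-- `N_β(f)`, the number of β's in `f`. -/
def NB (n : ℕ) (f : Fin n → Fin n → Option ABSymbol) : ℕ :=
  (Finset.univ.filter (fun p : Fin n × Fin n => f p.1 p.2 = some ABSymbol.B)).card

/-- The weight `wt(f) = α^{N_α(f)} β^{N_β(f)}`. -/
noncomputable def wt (α β : ℝ) (n : ℕ) (f : Fin n → Fin n → Option ABSymbol) : ℝ :=
  α ^ NA n f * β ^ NB n f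

open scoped Classical in
/-- The partition function `Z_n(α, β) = Σ_{S ∈ S̄_n} wt(S)`. -/
noncomputable def Z (α β : ℝ) (n : ℕ) : ℝ :=
  ∑ f ∈ Finset.univ.filter
      (fun f : Fin n → Fin n → Option ABSymbol => IsABStaircase n f),
    wt α β n f

open scoped Classical in
/-- The probability that the random tableau `S_{n,α,β}` lies in the event `E`. -/
noncomputable def stProb (α β : ℝ) (n : ℕ)
    (E : (Fin n → Fin n → Option ABSymbol) → Prop) : ℝ :=
  (∑ f ∈ Finset.univ.filter
      (fun f : Fin n → Fin n → Option ABSymbol => IsABStaircase n f ∧ E f),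
    wt α β n f) / Z α β n

open scoped Classical in
/-- The expectation of `g` under the law of the random tableau `S_{n,α,β}`. -/
noncomputable def stExp (α β : ℝ) (n : ℕ)
    (g : (Fin n → Fin n → Option ABSymbol) → ℝ) : ℝ :=
  (∑ f ∈ Finset.univ.filter
      (fun f : Fin n → Fin n → Option ABSymbol => IsABStaircase n f),
    wt α β n f * g f) / Z α β n

/-- `diag2 f j` is the content of the second-main-diagonal box `(n - j, j)`
(in the `1`-based indexing of the paper), defined for `1 ≤ j ≤ n - 1`. -/
def diag2 {n : ℕ} (f : Fin n → Fin n → Option ABSymbol) (j : ℕ) : Option ABSymbol :=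
  if h : 1 ≤ j ∧ j + 1 ≤ n then f ⟨n - j - 1, by omega⟩ ⟨j - 1, by omega⟩ else none

/-- `A_n`, the number of α's on the second main diagonal of `f`. -/
def Acount (n : ℕ) (f : Fin n → Fin n → Option ABSymbol) : ℕ :=
  ((Finset.Icc 1 (n - 1)).filter (fun j => diag2 f j = some ABSymbol.A)).card

/-- `B_n`, the number of β's on the second main diagonal of `f`. -/
def Bcount (n : ℕ) (f : Fin n → Fin n → Option ABSymbol) : ℕ :=
  ((Finset.Icc 1 (n - 1)).filter (fun j => diag2 f j = some ABSymbol.B)).card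

/-- `X_n`, the number of nonempty boxes on the second main diagonal of `f`. -/
def Xcount (n : ℕ) (f : Fin n → Fin n → Option ABSymbol) : ℕ :=
  ((Finset.Icc 1 (n - 1)).filter (fun j => diag2 f j ≠ none)).card

/-- `J_{r,m}`: the set of `r`-tuples `1 ≤ j_1 < … < j_r ≤ m` with
`j_k ≤ j_{k+1} - 2` for all `k`. -/
def Jset (r m : ℕ) : Finset (Fin r → ℕ) :=
  (Fintype.piFinset (fun _ : Fin r => Finset.Icc 1 m)).filter
    (fun j => ∀ k l : Fin r, k < l → j k + 2 ≤ j l)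

/-- The swap α ↔ β on symbols. -/
def swapSym : ABSymbol → ABSymbol
  | ABSymbol.A => ABSymbol.B
  | ABSymbol.B => ABSymbol.A

/-- The map φ: transpose the tableau and interchange α's and β's, so that box
`(i,j)` of `φ(S)` contains α iff box `(j,i)` of `S` contains β, and vice versa. -/
def flipTab (n : ℕ) (f : Fin n → Fin n → Option ABSymbol) :
    Fin n → Fin n → Option ABSymbol :=
  fun i j => (f j i).map swapSym

lemma map_swap_eq_A (o : Option ABSymbol) :
    o.map swapSym = some ABSymbol.A ↔ o = some ABSymbol.B := by
  cases o with
  | none => simp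
  | some s => cases s <;> simp [swapSym]

lemma map_swap_eq_B (o : Option ABSymbol) :
    o.map swapSym = some ABSymbol.B ↔ o = some ABSymbol.A := by
  cases o with
  | none => simp
  | some s => cases s <;> simp [swapSym]

lemma map_swap_eq_none (o : Option ABSymbol) :
    o.map swapSym = none ↔ o = none := by
  cases o <;> simp

lemma flipTab_flip (n : ℕ) (f : Fin n → Fin n → Option ABSymbol) :
    flipTab n (flipTab n f) = f := by
  funext i j
  simp only [flipTab, Option.map_map]
  cases h : f i j with
  | none => simp
  | some s => cases s <;> simp [swapSym, Function.comp]

lemma flip_staircase (n : ℕ) (f : Fin n → Fin n → Option ABSymbol)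
    (hf : IsABStaircase n f) : IsABStaircase n (flipTab n f) := by
  obtain ⟨h1, h2, h3, h4⟩ := hf
  refine ⟨?_, ?_, ?_, ?_⟩
  · intro i j hij
    simp only [flipTab, map_swap_eq_none]
    exact h1 j i (by omega)
  · intro i j i' hA hi'
    simp only [flipTab, map_swap_eq_A] at hA
    simp only [flipTab, map_swap_eq_none]
    exact h3 j i i' hA hi'
  · intro i j j' hB hj'
    simp only [flipTab, map_swap_eq_B] at hB
    simp only [flipTab, map_swap_eq_none]
    exact h2 j i j' hB hj'
  · intro i j hij
    simp only [flipTab, ne_eq, map_swap_eq_none]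
    exact h4 j i (by omega)

lemma NA_flip (n : ℕ) (f : Fin n → Fin n → Option ABSymbol) :
    NA n (flipTab n f) = NB n f := by
  unfold NA NB
  apply Finset.card_nbij' (fun p => p.swap) (fun p => p.swap)
  · intro p hp
    simp only [Finset.mem_coe, Finset.mem_filter, Finset.mem_univ, true_and, flipTab,
      map_swap_eq_A] at hp ⊢
    exact hp
  · intro p hp
    simp only [Finset.mem_coe, Finset.mem_filter, Finset.mem_univ, true_and, flipTab,
      map_swap_eq_A, Prod.fst_swap, Prod.snd_swap] at hp ⊢
    exact hp
  · intro p _; exact Prod.swap_swap p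
  · intro p _; exact Prod.swap_swap p

lemma NB_flip (n : ℕ) (f : Fin n → Fin n → Option ABSymbol) :
    NB n (flipTab n f) = NA n f := by
  unfold NA NB
  apply Finset.card_nbij' (fun p => p.swap) (fun p => p.swap)
  · intro p hp
    simp only [Finset.mem_coe, Finset.mem_filter, Finset.mem_univ, true_and, flipTab,
      map_swap_eq_B] at hp ⊢
    exact hp
  · intro p hp
    simp only [Finset.mem_coe, Finset.mem_filter, Finset.mem_univ, true_and, flipTab,
      map_swap_eq_B, Prod.fst_swap, Prod.snd_swap] at hp ⊢
    exact hp
  · intro p _; exact Prod.swap_swap p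
  · intro p _; exact Prod.swap_swap p

lemma diag2_flip_A (n : ℕ) (hn : 1 ≤ n) (f : Fin n → Fin n → Option ABSymbol)
    (j : ℕ) (hj1 : 1 ≤ j) (hj2 : j ≤ n - 1) :
    diag2 (flipTab n f) j = some ABSymbol.A ↔ diag2 f (n - j) = some ABSymbol.B := by
  unfold diag2
  rw [dif_pos (by omega), dif_pos (by omega)]
  simp only [flipTab, map_swap_eq_A]
  simp only [show n - (n - j) - 1 = j - 1 from by omega]

lemma diag2_flip_B (n : ℕ) (hn : 1 ≤ n) (f : Fin n → Fin n → Option ABSymbol)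
    (j : ℕ) (hj1 : 1 ≤ j) (hj2 : j ≤ n - 1) :
    diag2 (flipTab n f) j = some ABSymbol.B ↔ diag2 f (n - j) = some ABSymbol.A := by
  unfold diag2
  rw [dif_pos (by omega), dif_pos (by omega)]
  simp only [flipTab, map_swap_eq_B]
  simp only [show n - (n - j) - 1 = j - 1 from by omega]

lemma Acount_flip (n : ℕ) (hn : 1 ≤ n) (f : Fin n → Fin n → Option ABSymbol) :
    Acount n (flipTab n f) = Bcount n f := by
  unfold Acount Bcount
  apply Finset.card_nbij' (fun j => n - j) (fun j => n - j)
  · intro j hj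
    simp only [Finset.mem_coe, Finset.mem_filter, Finset.mem_Icc] at hj ⊢
    obtain ⟨⟨hj1, hj2⟩, hjA⟩ := hj
    exact ⟨⟨by omega, by omega⟩, (diag2_flip_A n hn f j hj1 hj2).mp hjA⟩
  · intro j hj
    simp only [Finset.mem_coe, Finset.mem_filter, Finset.mem_Icc] at hj ⊢
    obtain ⟨⟨hj1, hj2⟩, hjB⟩ := hj
    refine ⟨⟨by omega, by omega⟩, ?_⟩
    rw [diag2_flip_A n hn f (n - j) (by omega) (by omega)]
    rwa [show n - (n - j) = j by omega]
  · intro j hj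
    simp only [Finset.mem_coe, Finset.mem_filter, Finset.mem_Icc] at hj
    dsimp only
    omega
  · intro j hj
    simp only [Finset.mem_coe, Finset.mem_filter, Finset.mem_Icc] at hj
    dsimp only
    omega

lemma Bcount_flip (n : ℕ) (hn : 1 ≤ n) (f : Fin n → Fin n → Option ABSymbol) :
    Bcount n (flipTab n f) = Acount n f := by
  have := Acount_flip n hn (flipTab n f)
  rw [flipTab_flip] at this
  exact this.symm

lemma wt_flip (α β : ℝ) (n : ℕ) (f : Fin n → Fin n → Option ABSymbol) :
    wt β α n (flipTab n f) = wt α β n f := by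
  unfold wt
  rw [NA_flip, NB_flip, mul_comm]

open scoped Classical in
lemma Z_symm (α β : ℝ) (n : ℕ) : Z α β n = Z β α n := by
  unfold Z
  apply Finset.sum_nbij' (fun f => flipTab n f) (fun f => flipTab n f)
  · intro f hf
    simp only [Finset.mem_filter, Finset.mem_univ, true_and] at hf ⊢
    exact flip_staircase n f hf
  · intro f hf
    simp only [Finset.mem_filter, Finset.mem_univ, true_and] at hf ⊢
    exact flip_staircase n f hf
  · intro f _; exact flipTab_flip n f
  · intro f _; exact flipTab_flip n f
  · intro f _; exact (wt_flip α β n f).symm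

/-- φ is a well-defined involution of `S̄_n` interchanging the α- and β-counts,
sending the second-main-diagonal content at `j` to the content at `n - j` with
the symbols swapped; consequently `P(B_n = k)` for `S_{n,α,β}` equals
`P(A_n = k)` for `S_{n,β,α}`. -/
theorem stmt16 (n : ℕ) (hn : 1 ≤ n) :
    (∀ f : Fin n → Fin n → Option ABSymbol,
      IsABStaircase n f → IsABStaircase n (flipTab n f)) ∧
    (∀ f : Fin n → Fin n → Option ABSymbol, flipTab n (flipTab n f) = f) ∧
    (∀ f : Fin n → Fin n → Option ABSymbol,
      NA n (flipTab n f) = NB n f ∧ NB n (flipTab n f) = NA n f) ∧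
    (∀ f : Fin n → Fin n → Option ABSymbol, ∀ j : ℕ, 1 ≤ j → j ≤ n - 1 →
      (diag2 (flipTab n f) j = some ABSymbol.A ↔ diag2 f (n - j) = some ABSymbol.B)) ∧
    (∀ α β : ℝ, 0 < α → 0 < β → ∀ k : ℕ,
      stProb α β n (fun f => Bcount n f = k) = stProb β α n (fun f => Acount n f = k)) := by
  classical
  refine ⟨flip_staircase n, flipTab_flip n, fun f => ⟨NA_flip n f, NB_flip n f⟩,
    fun f j hj1 hj2 => diag2_flip_A n hn f j hj1 hj2, ?_⟩
  intro α β hα hβ k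
  unfold stProb
  rw [Z_symm α β n]
  congr 1
  apply Finset.sum_nbij' (fun f => flipTab n f) (fun f => flipTab n f)
  · intro f hf
    simp only [Finset.mem_filter, Finset.mem_univ, true_and] at hf ⊢
    exact ⟨flip_staircase n f hf.1, by rw [Acount_flip n hn f]; exact hf.2⟩
  · intro f hf
    simp only [Finset.mem_filter, Finset.mem_univ, true_and] at hf ⊢
    exact ⟨flip_staircase n f hf.1, by rw [Bcount_flip n hn f]; exact hf.2⟩
  · intro f _; exact flipTab_flip n f
  · intro f _; exact flipTab_flip n f
  · intro f _; exact (wt_flip α β n f).symm
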